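/- Let E be an exact category with enough projectives and P a projective cover of E having weak simple products. The following are equivalent: (1) for all objects J, X of P, the assignment a ↦ w_X(a) is right adjoint to (−) × X : Sub(J) → Sub(J × X) (i.e. for all b ∈ Sub(J) and a ∈ Sub(J × X), b × X ≤ a iff b ≤ w_X(a)); (2) the full subcategory of projective objects of E is closed under binary products; (3) every projective object of E is internally projective. -/

import Mathlib

open CategoryTheory Limits

namespace ExComp

universe v u

variable {E : Type u} [Category.{v} E]

/-- A regular epimorphism, as a property of a morphism. -/
def RegEpi {A B : E} (f : A ⟶ B) : Prop := Nonempty (RegularEpi f)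

/-- An object is (regular) projective if its covariant hom functor sends regular
epimorphisms to surjections. -/
def RegProjective (X : E) : Prop :=
  ∀ ⦃A B : E⦄ (e : A ⟶ B), RegEpi e → ∀ f : X ⟶ B, ∃ g : X ⟶ A, g ≫ e = f

/-- `E` has enough projectives: every object admits a regular epimorphism from a
projective object. -/
def EnoughRegProjectives (E : Type u) [Category.{v} E] : Prop :=
  ∀ A : E, ∃ (X : E) (p : X ⟶ A), RegProjective X ∧ RegEpi p

/-- An internal equivalence relation: a jointly monic, reflexive, symmetric and
transitive pair of parallel arrows. -/
structure IsEquivRelPair {R X : E} (r₁ r₂ : R ⟶ X) : Prop where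
  jointlyMono : ∀ ⦃T : E⦄ (h k : T ⟶ R), h ≫ r₁ = k ≫ r₁ → h ≫ r₂ = k ≫ r₂ → h = k
  refl : ∃ d : X ⟶ R, d ≫ r₁ = 𝟙 X ∧ d ≫ r₂ = 𝟙 X
  symm : ∃ s : R ⟶ R, s ≫ r₁ = r₂ ∧ s ≫ r₂ = r₁
  trans : ∀ ⦃T : E⦄ (p q : T ⟶ R), p ≫ r₂ = q ≫ r₁ →
    ∃ t : T ⟶ R, t ≫ r₁ = p ≫ r₁ ∧ t ≫ r₂ = q ≫ r₂

/-- An exact category: a finitely complete category where every morphism factors as a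
regular epi followed by a mono, regular epis are stable under pullback, and every
internal equivalence relation is effective (it is the kernel pair of the coequaliser
it admits). -/
structure IsExact (E : Type u) [Category.{v} E] [HasFiniteLimits E] : Prop where
  factor : ∀ ⦃A B : E⦄ (f : A ⟶ B), ∃ (I : E) (e : A ⟶ I) (m : I ⟶ B),
    RegEpi e ∧ Mono m ∧ e ≫ m = f
  stable : ∀ ⦃A B C : E⦄ (f : A ⟶ B) (g : C ⟶ B), RegEpi f → RegEpi (pullback.snd f g)
  effective : ∀ ⦃R X : E⦄ (r₁ r₂ : R ⟶ X), IsEquivRelPair r₁ r₂ →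
    ∃ (Q : E) (q : X ⟶ Q) (w : r₁ ≫ q = r₂ ≫ q),
      Nonempty (IsColimit (Cofork.ofπ q w)) ∧ IsPullback r₁ r₂ q q

/-- A projective cover of `E`: a (full sub)collection of objects, each projective,
such that every object of `E` admits a regular epimorphism from one of them. -/
def IsProjectiveCover (P : Set E) : Prop :=
  (∀ X ∈ P, RegProjective X) ∧ ∀ A : E, ∃ X ∈ P, ∃ p : X ⟶ A, RegEpi p

section FinLim
variable [HasFiniteLimits E]

/-- `X` is internally projective: every arrow `T ⨯ X ⟶ B` lifts along a regular epi
`A ↠ B` after passing to a regular epi `U ↠ T`. -/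
def InternallyProjective (X : E) : Prop :=
  ∀ ⦃T A B : E⦄ (e : A ⟶ B), RegEpi e → ∀ f : T ⨯ X ⟶ B,
    ∃ (U : E) (u : U ⟶ T) (g : U ⨯ X ⟶ A), RegEpi u ∧ g ≫ e = prod.map u (𝟙 X) ≫ f

/-- Cartesian closure, as a property: for every object `X` the functor `(−) ⨯ X` has a
right adjoint. -/
def CartesianClosedP (E : Type u) [Category.{v} E] [HasFiniteLimits E] : Prop :=
  ∀ X : E, (prod.functor.flip.obj X).IsLeftAdjoint

/-- Local cartesian closure, as a property: every slice is cartesian closed. -/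
def LocallyCartesianClosedP (E : Type u) [Category.{v} E] [HasFiniteLimits E] : Prop :=
  ∀ (I : E) (F : Over I), ((prod.functor (C := Over I)).flip.obj F).IsLeftAdjoint

end FinLim

/-! ## Weak products and weak simple products -/

/-- A weak product in `P` of `X` and `Y`: a span through which every span in `P`
factors (not necessarily uniquely). -/
structure IsWeakProduct (P : Set E) {X Y V : E} (p : V ⟶ X) (q : V ⟶ Y) : Prop where
  mem : V ∈ P
  lift : ∀ ⦃V' : E⦄, V' ∈ P → ∀ (p' : V' ⟶ X) (q' : V' ⟶ Y),
    ∃ h : V' ⟶ V, h ≫ p = p' ∧ h ≫ q = q'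

/-- An arrow out of a weak product is determined by projections if it coequalises
every pair of arrows (from an object of `P`) coequalised by both projections. -/
def DeterminedByProjections (P : Set E) {V X Y Z : E} (p : V ⟶ X) (q : V ⟶ Y)
    (f : V ⟶ Z) : Prop :=
  ∀ ⦃V' : E⦄, V' ∈ P → ∀ (h k : V' ⟶ V), h ≫ p = k ≫ p → h ≫ q = k ≫ q → h ≫ f = k ≫ f

/-- A candidate diagram for a weak simple product of a span `J ←f Y →g X`. -/
structure WSPCone (P : Set E) {J Y X : E} (f : Y ⟶ J) (g : Y ⟶ X)
    (W V : E) (w : W ⟶ J) (p : V ⟶ W) (q : V ⟶ X) (e : V ⟶ Y) : Prop where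
  memW : W ∈ P
  wp : IsWeakProduct P p q
  det : DeterminedByProjections P p q e
  comm₁ : p ≫ w = e ≫ f
  comm₂ : q = e ≫ g

/-- A weak simple product: a weakly terminal candidate diagram. -/
structure IsWeakSimpleProduct (P : Set E) {J Y X : E} (f : Y ⟶ J) (g : Y ⟶ X)
    (W V : E) (w : W ⟶ J) (p : V ⟶ W) (q : V ⟶ X) (e : V ⟶ Y) : Prop where
  cone : WSPCone P f g W V w p q e
  lift : ∀ ⦃W' V' : E⦄ (w' : W' ⟶ J) (p' : V' ⟶ W') (q' : V' ⟶ X) (e' : V' ⟶ Y),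
    WSPCone P f g W' V' w' p' q' e' →
    ∃ (α : W' ⟶ W) (β : V' ⟶ V),
      α ≫ w = w' ∧ β ≫ p = p' ≫ α ∧ β ≫ q = q' ∧ β ≫ e = e'

/-- `P` has weak simple products. -/
def HasWeakSimpleProducts (P : Set E) : Prop :=
  ∀ ⦃J Y X : E⦄, J ∈ P → Y ∈ P → X ∈ P → ∀ (f : Y ⟶ J) (g : Y ⟶ X),
    ∃ (W V : E) (w : W ⟶ J) (p : V ⟶ W) (q : V ⟶ X) (e : V ⟶ Y),
      IsWeakSimpleProduct P f g W V w p q e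

/-! ## Pseudo simple products -/

/-- A candidate diagram for a pseudo simple product (no determinacy requirement). -/
structure PSPCone (P : Set E) {J Y X : E} (f : Y ⟶ J) (g : Y ⟶ X)
    (W V : E) (w : W ⟶ J) (p : V ⟶ W) (q : V ⟶ X) (e : V ⟶ Y) : Prop where
  memW : W ∈ P
  wp : IsWeakProduct P p q
  comm₁ : p ≫ w = e ≫ f
  comm₂ : q = e ≫ g

/-- A pseudo simple product: a weakly terminal candidate diagram. -/
structure IsPseudoSimpleProduct (P : Set E) {J Y X : E} (f : Y ⟶ J) (g : Y ⟶ X)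
    (W V : E) (w : W ⟶ J) (p : V ⟶ W) (q : V ⟶ X) (e : V ⟶ Y) : Prop where
  cone : PSPCone P f g W V w p q e
  lift : ∀ ⦃W' V' : E⦄ (w' : W' ⟶ J) (p' : V' ⟶ W') (q' : V' ⟶ X) (e' : V' ⟶ Y),
    PSPCone P f g W' V' w' p' q' e' →
    ∃ (α : W' ⟶ W) (β : V' ⟶ V),
      α ≫ w = w' ∧ β ≫ p = p' ≫ α ∧ β ≫ q = q' ∧ β ≫ e = e'

/-- `P` has pseudo simple products. -/
def HasPseudoSimpleProducts (P : Set E) : Prop :=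
  ∀ ⦃J Y X : E⦄, J ∈ P → Y ∈ P → X ∈ P → ∀ (f : Y ⟶ J) (g : Y ⟶ X),
    ∃ (W V : E) (w : W ⟶ J) (p : V ⟶ W) (q : V ⟶ X) (e : V ⟶ Y),
      IsPseudoSimpleProduct P f g W V w p q e

/-! ## Weak exponentials -/

/-- A candidate diagram for a weak exponential of `X` and `Y`. -/
structure WExpCone (P : Set E) {X Y : E} (W V : E) (p : V ⟶ W) (q : V ⟶ X)
    (e : V ⟶ Y) : Prop where
  memW : W ∈ P
  wp : IsWeakProduct P p q
  det : DeterminedByProjections P p q e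

/-- A weak exponential of `X` and `Y` in `P`. -/
structure IsWeakExponential (P : Set E) {X Y : E} (W V : E) (p : V ⟶ W) (q : V ⟶ X)
    (e : V ⟶ Y) : Prop where
  cone : WExpCone P W V p q e
  lift : ∀ ⦃W' V' : E⦄ (p' : V' ⟶ W') (q' : V' ⟶ X) (e' : V' ⟶ Y),
    WExpCone P W' V' p' q' e' →
    ∃ (α : W' ⟶ W) (β : V' ⟶ V), β ≫ p = p' ≫ α ∧ β ≫ q = q' ∧ β ≫ e = e'

/-- `P` has weak exponentials. -/
def HasWeakExponentials (P : Set E) : Prop :=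
  ∀ ⦃X Y : E⦄, X ∈ P → Y ∈ P →
    ∃ (W V : E) (p : V ⟶ W) (q : V ⟶ X) (e : V ⟶ Y), IsWeakExponential P W V p q e

/-- A quasi exponential of `X` and `B`: the weak universal property of an exponential
restricted to projective sources. -/
def IsQuasiExponential [HasFiniteLimits E] (P : Set E) (X : E) {B : E} (W : E)
    (e : W ⨯ X ⟶ B) : Prop :=
  ∀ ⦃Z : E⦄, Z ∈ P → ∀ f : Z ⨯ X ⟶ B, ∃ g : Z ⟶ W, prod.map g (𝟙 X) ≫ e = f

section FinLim2
variable [HasFiniteLimits E]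

/-! ## Pseudo equivalence relations, equalities and generalised weak (simple) products -/

/-- A pseudo equivalence relation: a pair of parallel arrows whose image in `E` is an
equivalence relation. -/
def IsPseudoEquivRel {Y1 Y0 : E} (y₁ y₂ : Y1 ⟶ Y0) : Prop :=
  ∃ (R : E) (e : Y1 ⟶ R) (m : R ⟶ Y0 ⨯ Y0), RegEpi e ∧ Mono m ∧
    e ≫ m = prod.lift y₁ y₂ ∧ IsEquivRelPair (m ≫ prod.fst) (m ≫ prod.snd)

/-- An equality for a weak limit, relative to the comparison arrow `c : V0 ⟶ L` into
the actual limit: a pseudo equivalence relation `v₁, v₂ : V1 ⇉ V0` in `P` such that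
`c` is a coequaliser of `v₁, v₂` and `V1` regularly covers the kernel pair of `c`. -/
structure IsEqualityFor (P : Set E) {V1 V0 L : E} (c : V0 ⟶ L) (v₁ v₂ : V1 ⟶ V0) :
    Prop where
  mem : V1 ∈ P
  per : IsPseudoEquivRel v₁ v₂
  w : v₁ ≫ c = v₂ ≫ c
  coeq : Nonempty (IsColimit (Cofork.ofπ c w))
  cover : RegEpi (pullback.lift v₁ v₂ w)

/-- An arrow `e : V ⟶ Z0` out of a weak product with projections `p, q` preserves
projections with respect to a pseudo equivalence relation `z₁, z₂ : Z1 ⇉ Z0` if for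
any equality `v₁, v₂ : V1 ⇉ V` for the weak product there is `t : V1 ⟶ Z1` with
`t ≫ zᵢ = vᵢ ≫ e`. -/
def PreservesProjWP (P : Set E) {V X Y Z1 Z0 : E} (p : V ⟶ X) (q : V ⟶ Y)
    (z₁ z₂ : Z1 ⟶ Z0) (e : V ⟶ Z0) : Prop :=
  ∀ ⦃V1 : E⦄ (v₁ v₂ : V1 ⟶ V), IsEqualityFor P (prod.lift p q) v₁ v₂ →
    ∃ t : V1 ⟶ Z1, t ≫ z₁ = v₁ ≫ e ∧ t ≫ z₂ = v₂ ≫ e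

/-- A candidate diagram for a generalised weak simple product of `f` and `g` with
respect to the pseudo equivalence relation `y₁, y₂`. -/
structure GWSPCone (P : Set E) {Y1 Y0 J X : E} (y₁ y₂ : Y1 ⟶ Y0) (f : Y0 ⟶ J)
    (g : Y0 ⟶ X) (W V : E) (w : W ⟶ J) (p : V ⟶ W) (q : V ⟶ X) (e : V ⟶ Y0) :
    Prop where
  memW : W ∈ P
  wp : IsWeakProduct P p q
  pres : PreservesProjWP P p q y₁ y₂ e
  comm₁ : p ≫ w = e ≫ f
  comm₂ : q = e ≫ g

/-- A generalised weak simple product: a weakly terminal candidate diagram. -/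
structure IsGWSP (P : Set E) {Y1 Y0 J X : E} (y₁ y₂ : Y1 ⟶ Y0) (f : Y0 ⟶ J)
    (g : Y0 ⟶ X) (W V : E) (w : W ⟶ J) (p : V ⟶ W) (q : V ⟶ X) (e : V ⟶ Y0) :
    Prop where
  cone : GWSPCone P y₁ y₂ f g W V w p q e
  lift : ∀ ⦃W' V' : E⦄ (w' : W' ⟶ J) (p' : V' ⟶ W') (q' : V' ⟶ X) (e' : V' ⟶ Y0),
    GWSPCone P y₁ y₂ f g W' V' w' p' q' e' →
    ∃ (α : W' ⟶ W) (β : V' ⟶ V),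
      α ≫ w = w' ∧ β ≫ p = p' ≫ α ∧ β ≫ q = q' ∧ β ≫ e = e'

/-- `P` has generalised weak simple products. -/
def HasGWSP (P : Set E) : Prop :=
  ∀ ⦃Y1 Y0 J X : E⦄, Y1 ∈ P → Y0 ∈ P → J ∈ P → X ∈ P →
    ∀ (y₁ y₂ : Y1 ⟶ Y0), IsPseudoEquivRel y₁ y₂ →
    ∀ (f : Y0 ⟶ J) (g : Y0 ⟶ X), y₁ ≫ f = y₂ ≫ f → y₁ ≫ g = y₂ ≫ g →
    ∃ (W V : E) (w : W ⟶ J) (p : V ⟶ W) (q : V ⟶ X) (e : V ⟶ Y0),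
      IsGWSP P y₁ y₂ f g W V w p q e

/-- A candidate diagram for a generalised weak exponential of `X` and `y₁, y₂`. -/
structure GWExpCone (P : Set E) {X Y1 Y0 : E} (y₁ y₂ : Y1 ⟶ Y0)
    (W V : E) (p : V ⟶ W) (q : V ⟶ X) (e : V ⟶ Y0) : Prop where
  memW : W ∈ P
  wp : IsWeakProduct P p q
  pres : PreservesProjWP P p q y₁ y₂ e

/-- A generalised weak exponential of `X` and a pseudo equivalence relation. -/
structure IsGWExp (P : Set E) {X Y1 Y0 : E} (y₁ y₂ : Y1 ⟶ Y0)
    (W V : E) (p : V ⟶ W) (q : V ⟶ X) (e : V ⟶ Y0) : Prop where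
  cone : GWExpCone P y₁ y₂ W V p q e
  lift : ∀ ⦃W' V' : E⦄ (p' : V' ⟶ W') (q' : V' ⟶ X) (e' : V' ⟶ Y0),
    GWExpCone P y₁ y₂ W' V' p' q' e' →
    ∃ (α : W' ⟶ W) (β : V' ⟶ V), β ≫ p = p' ≫ α ∧ β ≫ q = q' ∧ β ≫ e = e'

/-! ## Weak pullbacks and generalised weak dependent products -/

/-- A weak pullback in `P` of the cospan `X →f J ←w W`. -/
structure IsWeakPullback (P : Set E) {X J W V : E} (f : X ⟶ J) (w : W ⟶ J)
    (a : V ⟶ X) (b : V ⟶ W) : Prop where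
  mem : V ∈ P
  comm : a ≫ f = b ≫ w
  lift : ∀ ⦃V' : E⦄, V' ∈ P → ∀ (a' : V' ⟶ X) (b' : V' ⟶ W), a' ≫ f = b' ≫ w →
    ∃ h : V' ⟶ V, h ≫ a = a' ∧ h ≫ b = b'

/-- Preservation of projections for an arrow out of a weak pullback. -/
def PreservesProjWPB (P : Set E) {V X J W Z1 Z0 : E} (f : X ⟶ J) (w : W ⟶ J)
    (a : V ⟶ X) (b : V ⟶ W) (h : a ≫ f = b ≫ w) (z₁ z₂ : Z1 ⟶ Z0) (e : V ⟶ Z0) :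
    Prop :=
  ∀ ⦃V1 : E⦄ (v₁ v₂ : V1 ⟶ V), IsEqualityFor P (pullback.lift a b h) v₁ v₂ →
    ∃ t : V1 ⟶ Z1, t ≫ z₁ = v₁ ≫ e ∧ t ≫ z₂ = v₂ ≫ e

/-- A candidate diagram for a generalised weak dependent product of `g : Y0 ⟶ X`
along `f : X ⟶ J` with respect to `y₁, y₂`. -/
structure GWDPCone (P : Set E) {Y1 Y0 X J : E} (y₁ y₂ : Y1 ⟶ Y0) (g : Y0 ⟶ X)
    (f : X ⟶ J) (W V : E) (w : W ⟶ J) (a : V ⟶ X) (b : V ⟶ W) (e : V ⟶ Y0) :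
    Prop where
  memW : W ∈ P
  comm : a ≫ f = b ≫ w
  wpb : IsWeakPullback P f w a b
  overX : e ≫ g = a
  pres : PreservesProjWPB P f w a b comm y₁ y₂ e

/-- A generalised weak dependent product: a weakly terminal candidate diagram. -/
structure IsGWDP (P : Set E) {Y1 Y0 X J : E} (y₁ y₂ : Y1 ⟶ Y0) (g : Y0 ⟶ X)
    (f : X ⟶ J) (W V : E) (w : W ⟶ J) (a : V ⟶ X) (b : V ⟶ W) (e : V ⟶ Y0) :
    Prop where
  cone : GWDPCone P y₁ y₂ g f W V w a b e
  lift : ∀ ⦃W' V' : E⦄ (w' : W' ⟶ J) (a' : V' ⟶ X) (b' : V' ⟶ W') (e' : V' ⟶ Y0),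
    GWDPCone P y₁ y₂ g f W' V' w' a' b' e' →
    ∃ (α : W' ⟶ W) (β : V' ⟶ V),
      α ≫ w = w' ∧ β ≫ a = a' ∧ β ≫ b = b' ≫ α ∧ β ≫ e = e'

/-- `P` has generalised weak dependent products (i.e. `P` is weakly locally cartesian
closed). -/
def HasGWDP (P : Set E) : Prop :=
  ∀ ⦃Y1 Y0 X J : E⦄, Y1 ∈ P → Y0 ∈ P → X ∈ P → J ∈ P →
    ∀ (y₁ y₂ : Y1 ⟶ Y0), IsPseudoEquivRel y₁ y₂ →
    ∀ (g : Y0 ⟶ X) (f : X ⟶ J), y₁ ≫ g = y₂ ≫ g →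
    ∃ (W V : E) (w : W ⟶ J) (a : V ⟶ X) (b : V ⟶ W) (e : V ⟶ Y0),
      IsGWDP P y₁ y₂ g f W V w a b e

/-! ## The functor `w_X` on subobjects induced by weak simple products -/

/-- The adjunction property of the weak-simple-product operation `w_X` on subobjects:
for every subobject `a : A ↪ J ⨯ X`, every `P`-cover `Y ↠ A`, every weak simple
product `W → J` of the induced span and every image factorisation `W ↠ I ↪ J` of it,
the subobject `I ↪ J` is a value at `a` of a right adjoint to
`(−) ⨯ X : Sub(J) → Sub(J ⨯ X)`. -/
def WAdj (P : Set E) (J X : E) : Prop :=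
  ∀ ⦃A : E⦄ (a : A ⟶ J ⨯ X), Mono a →
  ∀ ⦃Y : E⦄, Y ∈ P → ∀ (c : Y ⟶ A), RegEpi c →
  ∀ ⦃W V : E⦄ (w : W ⟶ J) (p : V ⟶ W) (q : V ⟶ X) (e : V ⟶ Y),
    IsWeakSimpleProduct P (c ≫ a ≫ prod.fst) (c ≫ a ≫ prod.snd) W V w p q e →
  ∀ ⦃I : E⦄ (ew : W ⟶ I) (m : I ⟶ J), RegEpi ew → Mono m → ew ≫ m = w →
  ∀ ⦃B : E⦄ (b : B ⟶ J), Mono b →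
    ((∃ t : B ⨯ X ⟶ A, t ≫ a = prod.map b (𝟙 X)) ↔ ∃ s : B ⟶ I, s ≫ m = b)

/-! ## Weak dependent products (à la Carboni–Rosolini) -/

/-- `P` has weak dependent products: for `f : X ⟶ J` and `g : Y ⟶ X` in `P` there are
`w : W ⟶ J` in `P` and a surjection `Hom_{P/J}(h, w) → Hom_{P/X}(f*(h), g)` natural
in `h ∈ P/J`. -/
def HasWeakDependentProducts (P : Set E) : Prop :=
  ∀ ⦃X J Y : E⦄, X ∈ P → J ∈ P → Y ∈ P → ∀ (f : X ⟶ J) (g : Y ⟶ X),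
    ∃ (W : E) (_ : W ∈ P) (w : W ⟶ J)
      (ε : ∀ ⦃T : E⦄, T ∈ P → ∀ (h : T ⟶ J) (k : T ⟶ W), k ≫ w = h →
        (pullback h f ⟶ Y)),
      (∀ ⦃T : E⦄ (hT : T ∈ P) (h : T ⟶ J) (k : T ⟶ W) (hk : k ≫ w = h),
         ε hT h k hk ≫ g = pullback.snd h f) ∧
      (∀ ⦃T : E⦄ (hT : T ∈ P) (h : T ⟶ J) (d : pullback h f ⟶ Y),
         d ≫ g = pullback.snd h f → ∃ (k : T ⟶ W) (hk : k ≫ w = h), ε hT h k hk = d) ∧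
      (∀ ⦃T' T : E⦄ (hT' : T' ∈ P) (hT : T ∈ P) (u : T' ⟶ T) (h : T ⟶ J) (k : T ⟶ W)
         (hk : k ≫ w = h),
         ε hT' (u ≫ h) (u ≫ k) (by rw [Category.assoc, hk]) =
           pullback.map (u ≫ h) f h f u (𝟙 X) (𝟙 J) (by simp) (by simp) ≫ ε hT h k hk)

end FinLim2

/-! ## Auxiliary lemmas for the proof of Statement 5 -/

section Aux

variable {E : Type u} [Category.{v} E]

lemma RegEpi.epi {A B : E} {f : A ⟶ B} (h : RegEpi f) : Epi f := by
  obtain ⟨h⟩ := h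
  exact h.epi f

lemma regEpi_comp_iso {A B C : E} {f : A ⟶ B} {g : B ⟶ C} (hf : RegEpi f) (hg : IsIso g) :
    RegEpi (f ≫ g) := by
  obtain ⟨hf⟩ := hf
  haveI := isRegularEpi_of_regularEpi hf; haveI := hg
  have hw : hf.left ≫ (f ≫ g) = hf.right ≫ (f ≫ g) := by
    rw [← Category.assoc, hf.w, Category.assoc]
  refine ⟨⟨hf.W, hf.left, hf.right, hw, Cofork.IsColimit.mk _
    (fun s => inv g ≫ Cofork.IsColimit.desc hf.isColimit s.π s.condition) (fun s => ?_)
    (fun s d hd => ?_)⟩⟩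
  · have h1 := Cofork.IsColimit.π_desc' hf.isColimit s.π s.condition
    simp only [Cofork.π_ofπ] at h1 ⊢
    rw [Category.assoc, IsIso.hom_inv_id_assoc, h1]
  · haveI : Epi (f ≫ g) := epi_comp f g
    rw [← cancel_epi (f ≫ g)]
    have h1 := Cofork.IsColimit.π_desc' hf.isColimit s.π s.condition
    simp only [Cofork.π_ofπ] at h1 hd ⊢
    rw [hd, Category.assoc, IsIso.hom_inv_id_assoc, h1]

variable [HasFiniteLimits E]

lemma regEpi_comp (hE : IsExact E) {A B C : E} {f : A ⟶ B} {g : B ⟶ C}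
    (hf : RegEpi f) (hg : RegEpi g) : RegEpi (f ≫ g) := by
  obtain ⟨I, r, m, hr, hm, hrm⟩ := hE.factor (f ≫ g)
  haveI := isRegularEpi_of_regularEpi hf.some; haveI := isRegularEpi_of_regularEpi hg.some; haveI := hm
  haveI : StrongEpi (f ≫ g) := strongEpi_comp f g
  haveI : StrongEpi (r ≫ m) := by rwa [hrm]
  haveI : StrongEpi m := strongEpi_of_strongEpi r m
  haveI hiso : IsIso m := isIso_of_mono_of_strongEpi m
  rw [← hrm]
  exact regEpi_comp_iso hr hiso

lemma desc_of_regEpi {A B C : E} {f : A ⟶ B} (hf : RegEpi f) (g : A ⟶ C)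
    (hg : pullback.fst f f ≫ g = pullback.snd f f ≫ g) : ∃ d : B ⟶ C, f ≫ d = g := by
  obtain ⟨hf⟩ := hf
  have hw : hf.left ≫ g = hf.right ≫ g := by
    have h1 : pullback.lift hf.left hf.right hf.w ≫ pullback.fst f f = hf.left :=
      pullback.lift_fst _ _ _
    have h2 : pullback.lift hf.left hf.right hf.w ≫ pullback.snd f f = hf.right :=
      pullback.lift_snd _ _ _
    calc hf.left ≫ g = (pullback.lift hf.left hf.right hf.w ≫ pullback.fst f f) ≫ g := by
          rw [h1]
      _ = (pullback.lift hf.left hf.right hf.w ≫ pullback.snd f f) ≫ g := by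
          rw [Category.assoc, hg, Category.assoc]
      _ = hf.right ≫ g := by rw [h2]
  refine ⟨Cofork.IsColimit.desc hf.isColimit g hw, ?_⟩
  simpa using Cofork.IsColimit.π_desc' hf.isColimit g hw

lemma weakProduct_of_cover {P : Set E} (hP : IsProjectiveCover P)
    {Z X V : E} (hV : V ∈ P) {r : V ⟶ Z ⨯ X} (hr : RegEpi r) :
    IsWeakProduct P (r ≫ prod.fst) (r ≫ prod.snd) := by
  refine ⟨hV, fun V' hV' p' q' => ?_⟩
  obtain ⟨h, hh⟩ := hP.1 V' hV' r hr (prod.lift p' q')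
  refine ⟨h, ?_, ?_⟩
  · rw [← Category.assoc, hh, prod.lift_fst]
  · rw [← Category.assoc, hh, prod.lift_snd]

/-- (3) ⇒ (2): if every projective is internally projective, then projectives are
closed under binary products. -/
lemma intProj_to_prodProj
    (h : ∀ X : E, RegProjective X → InternallyProjective X) :
    ∀ X Y : E, RegProjective X → RegProjective Y → RegProjective (X ⨯ Y) := by
  intro X Y hX hY A B e he f
  obtain ⟨U, u, g, hu, hg⟩ := h Y hY e he f
  obtain ⟨s, hs⟩ := hX u hu (𝟙 X)
  have hmaps : prod.map s (𝟙 Y) ≫ prod.map u (𝟙 Y) = 𝟙 (X ⨯ Y) := by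
    apply Limits.prod.hom_ext <;> simp [hs]
  refine ⟨prod.map s (𝟙 Y) ≫ g, ?_⟩
  rw [Category.assoc, hg, ← Category.assoc, hmaps, Category.id_comp]

/-- (2) ⇒ (3): if projectives are closed under binary products, then every projective
is internally projective. -/
lemma prodProj_to_intProj {P : Set E} (hP : IsProjectiveCover P)
    (hcl : ∀ X Y : E, RegProjective X → RegProjective Y → RegProjective (X ⨯ Y)) :
    ∀ X : E, RegProjective X → InternallyProjective X := by
  intro X hX T A B e he f
  obtain ⟨J, hJ, j₀, hj₀⟩ := hP.2 T
  obtain ⟨g, hg⟩ := hcl J X (hP.1 J hJ) hX e he (prod.map j₀ (𝟙 X) ≫ f)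
  exact ⟨J, j₀, g, hj₀, hg⟩

/-- (2) ⇒ (1): if projectives are closed under binary products, then the weak simple
product operation on subobjects satisfies the adjunction property. -/
lemma prodProj_to_wadj {P : Set E} (hP : IsProjectiveCover P)
    (hcl : ∀ X Y : E, RegProjective X → RegProjective Y → RegProjective (X ⨯ Y)) :
    ∀ J ∈ P, ∀ X ∈ P, WAdj P J X := by
  intro J hJ X hX A a ha Y hY c hc W V w p q e hWSP I ew m hew hm hfac B b hb
  constructor
  · -- `b ⨯ X ≤ a` implies `b ≤ w_X a`
    rintro ⟨t, ht⟩
    obtain ⟨Z, hZ, z, hz⟩ := hP.2 B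
    have hZX : RegProjective (Z ⨯ X) := hcl Z X (hP.1 Z hZ) (hP.1 X hX)
    obtain ⟨et, het⟩ := hZX c hc (prod.map z (𝟙 X) ≫ t)
    obtain ⟨V', hV', r, hr⟩ := hP.2 (Z ⨯ X)
    set p' : V' ⟶ Z := r ≫ prod.fst with hp'
    set q' : V' ⟶ X := r ≫ prod.snd with hq'
    set e'' : V' ⟶ Y := r ≫ et with he''
    have wp' : IsWeakProduct P p' q' := weakProduct_of_cover hP hV' hr
    have det' : DeterminedByProjections P p' q' e'' := by
      intro V'' hV'' h k hph hqh
      have hrk : h ≫ r = k ≫ r := by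
        apply Limits.prod.hom_ext
        · simpa [hp', Category.assoc] using hph
        · simpa [hq', Category.assoc] using hqh
      rw [he'', ← Category.assoc, hrk, Category.assoc]
    have key : e'' ≫ c = r ≫ prod.map z (𝟙 X) ≫ t := by
      rw [he'', Category.assoc, het]
    have e2 : e'' ≫ c ≫ a = r ≫ prod.map (z ≫ b) (𝟙 X) := by
      rw [← Category.assoc e'' c a, key]
      simp only [Category.assoc]
      rw [ht]
      rw [show prod.map z (𝟙 X) ≫ prod.map b (𝟙 X) = prod.map (z ≫ b) (𝟙 X) from by
        rw [prod.map_map, Category.comp_id]]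
    have comm₁ : p' ≫ (z ≫ b) = e'' ≫ (c ≫ a ≫ prod.fst) := by
      calc p' ≫ (z ≫ b) = r ≫ prod.fst ≫ (z ≫ b) := by
            rw [hp']; simp only [Category.assoc]
        _ = (r ≫ prod.map (z ≫ b) (𝟙 X)) ≫ prod.fst := by simp
        _ = (e'' ≫ c ≫ a) ≫ prod.fst := by rw [e2]
        _ = e'' ≫ (c ≫ a ≫ prod.fst) := by simp only [Category.assoc]
    have comm₂ : q' = e'' ≫ (c ≫ a ≫ prod.snd) := by
      have : e'' ≫ (c ≫ a ≫ prod.snd) = (e'' ≫ c ≫ a) ≫ prod.snd := by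
        simp only [Category.assoc]
      rw [this, e2, hq']
      simp
    have cone' : WSPCone P (c ≫ a ≫ prod.fst) (c ≫ a ≫ prod.snd)
        Z V' (z ≫ b) p' q' e'' := ⟨hZ, wp', det', comm₁, comm₂⟩
    obtain ⟨α, β, hα, -, -, -⟩ := hWSP.lift (z ≫ b) p' q' e'' cone'
    have cond : pullback.fst z z ≫ (α ≫ ew) = pullback.snd z z ≫ (α ≫ ew) := by
      rw [← cancel_mono m]
      simp only [Category.assoc, hfac, hα]
      rw [pullback.condition_assoc]
    obtain ⟨s, hsz⟩ := desc_of_regEpi hz (α ≫ ew) cond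
    refine ⟨s, ?_⟩
    haveI := hz.epi
    rw [← cancel_epi z, ← Category.assoc, hsz, Category.assoc, hfac, hα]
  · -- `b ≤ w_X a` implies `b ⨯ X ≤ a`
    rintro ⟨s, hs⟩
    obtain ⟨Cc, hCc, ρc, hρc⟩ := hP.2 (B ⨯ X)
    obtain ⟨l, hl⟩ := hP.1 Cc hCc ew hew (ρc ≫ prod.fst ≫ s)
    obtain ⟨h, hhp, hhq⟩ := hWSP.cone.wp.lift hCc l (ρc ≫ prod.snd)
    set t' : Cc ⟶ A := h ≫ e ≫ c with ht'def
    have ht' : t' ≫ a = ρc ≫ prod.map b (𝟙 X) := by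
      apply Limits.prod.hom_ext
      · calc (t' ≫ a) ≫ prod.fst = h ≫ e ≫ (c ≫ a ≫ prod.fst) := by
              simp only [ht'def, Category.assoc]
          _ = h ≫ p ≫ w := by rw [← hWSP.cone.comm₁]
          _ = (h ≫ p) ≫ w := by rw [Category.assoc]
          _ = l ≫ w := by rw [hhp]
          _ = l ≫ ew ≫ m := by rw [← hfac]
          _ = (ρc ≫ prod.fst ≫ s) ≫ m := by rw [← Category.assoc, hl]
          _ = ρc ≫ prod.fst ≫ b := by simp only [Category.assoc, hs]
          _ = (ρc ≫ prod.map b (𝟙 X)) ≫ prod.fst := by simp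
      · calc (t' ≫ a) ≫ prod.snd = h ≫ e ≫ (c ≫ a ≫ prod.snd) := by
              simp only [ht'def, Category.assoc]
          _ = h ≫ q := by rw [← hWSP.cone.comm₂]
          _ = ρc ≫ prod.snd := hhq
          _ = (ρc ≫ prod.map b (𝟙 X)) ≫ prod.snd := by simp
    have cond : pullback.fst ρc ρc ≫ t' = pullback.snd ρc ρc ≫ t' := by
      rw [← cancel_mono a]
      simp only [Category.assoc, ht']
      rw [pullback.condition_assoc]
    obtain ⟨t, htt⟩ := desc_of_regEpi hρc t' cond
    refine ⟨t, ?_⟩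
    haveI := hρc.epi
    rw [← cancel_epi ρc, ← Category.assoc, htt, ht']

/-- (1) ⇒ (3): the adjunction property implies that every projective object is
internally projective. -/
lemma wadj_to_intProj (hE : IsExact E) {P : Set E} (hP : IsProjectiveCover P)
    (hwsp : HasWeakSimpleProducts P)
    (hw : ∀ J ∈ P, ∀ X ∈ P, WAdj P J X) :
    ∀ X : E, RegProjective X → InternallyProjective X := by
  -- First the case of objects of `P`.
  have main : ∀ X ∈ P, InternallyProjective X := by
    intro X hX T A B e he f
    obtain ⟨J, hJ, j₀, hj₀⟩ := hP.2 T
    set f₁ : J ⨯ X ⟶ B := prod.map j₀ (𝟙 X) ≫ f with hf₁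
    set ρ : pullback e f₁ ⟶ J ⨯ X := pullback.snd e f₁ with hρdef
    set π₂ : pullback e f₁ ⟶ A := pullback.fst e f₁ with hπ₂def
    have hρ : RegEpi ρ := hE.stable e f₁ he
    obtain ⟨Y, hY, cY, hcY⟩ := hP.2 (pullback e f₁)
    set k : Y ⟶ J ⨯ X := cY ≫ ρ with hkdef
    have hk : RegEpi k := regEpi_comp hE hcY hρ
    obtain ⟨W, V, w, p, q, e', hWSP⟩ := hwsp hJ hY hX (k ≫ prod.fst) (k ≫ prod.snd)
    obtain ⟨I, ew, m, hew, hm, hfac⟩ := hE.factor w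
    have hWSP' : IsWeakSimpleProduct P (k ≫ 𝟙 (J ⨯ X) ≫ prod.fst)
        (k ≫ 𝟙 (J ⨯ X) ≫ prod.snd) W V w p q e' := by
      simpa using hWSP
    have hadj := hw J hJ X hX (𝟙 (J ⨯ X)) inferInstance hY k hk w p q e' hWSP'
      ew m hew hm hfac (𝟙 J) inferInstance
    obtain ⟨s, hs⟩ := hadj.1 ⟨𝟙 _, by simp⟩
    haveI := hm
    haveI : IsSplitEpi m := IsSplitEpi.mk' ⟨s, hs⟩
    haveI hmiso : IsIso m := isIso_of_mono_of_isSplitEpi m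
    have hwre : RegEpi w := by
      rw [← hfac]; exact regEpi_comp_iso hew hmiso
    -- construct the lift on `W ⨯ X`
    obtain ⟨V₀, hV₀, r, hr⟩ := hP.2 (W ⨯ X)
    obtain ⟨h, hhp, hhq⟩ := hWSP.cone.wp.lift hV₀ (r ≫ prod.fst) (r ≫ prod.snd)
    set τ' : V₀ ⟶ pullback e f₁ := h ≫ e' ≫ cY with hτ'def
    have hτ'ρ : τ' ≫ ρ = r ≫ prod.map w (𝟙 X) := by
      apply Limits.prod.hom_ext
      · calc (τ' ≫ ρ) ≫ prod.fst = h ≫ e' ≫ (k ≫ prod.fst) := by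
              simp only [hτ'def, hkdef, Category.assoc]
          _ = h ≫ p ≫ w := by rw [← hWSP.cone.comm₁]
          _ = (h ≫ p) ≫ w := by rw [Category.assoc]
          _ = (r ≫ prod.fst) ≫ w := by rw [hhp]
          _ = (r ≫ prod.map w (𝟙 X)) ≫ prod.fst := by simp
      · calc (τ' ≫ ρ) ≫ prod.snd = h ≫ e' ≫ (k ≫ prod.snd) := by
              simp only [hτ'def, hkdef, Category.assoc]
          _ = h ≫ q := by rw [← hWSP.cone.comm₂]
          _ = r ≫ prod.snd := by rw [hhq]
          _ = (r ≫ prod.map w (𝟙 X)) ≫ prod.snd := by simp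
    -- `τ'` coequalises the kernel pair of `r`
    have cond : pullback.fst r r ≫ τ' = pullback.snd r r ≫ τ' := by
      obtain ⟨K', hK', κ, hκ⟩ := hP.2 (pullback r r)
      haveI := hκ.epi
      rw [← cancel_epi κ]
      have hph : (κ ≫ pullback.fst r r ≫ h) ≫ p = (κ ≫ pullback.snd r r ≫ h) ≫ p := by
        simp only [Category.assoc, hhp]
        rw [pullback.condition_assoc]
      have hqh : (κ ≫ pullback.fst r r ≫ h) ≫ q = (κ ≫ pullback.snd r r ≫ h) ≫ q := by
        simp only [Category.assoc, hhq]
        rw [pullback.condition_assoc]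
      have hdet := hWSP.cone.det hK' _ _ hph hqh
      calc κ ≫ pullback.fst r r ≫ τ'
          = ((κ ≫ pullback.fst r r ≫ h) ≫ e') ≫ cY := by
            simp only [hτ'def, Category.assoc]
        _ = ((κ ≫ pullback.snd r r ≫ h) ≫ e') ≫ cY := by rw [hdet]
        _ = κ ≫ pullback.snd r r ≫ τ' := by simp only [hτ'def, Category.assoc]
    obtain ⟨τ, hτ⟩ := desc_of_regEpi hr τ' cond
    have hτρ : τ ≫ ρ = prod.map w (𝟙 X) := by
      haveI := hr.epi
      rw [← cancel_epi r, ← Category.assoc, hτ, hτ'ρ]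
    refine ⟨W, w ≫ j₀, τ ≫ π₂, regEpi_comp hE hwre hj₀, ?_⟩
    have hpb : π₂ ≫ e = ρ ≫ f₁ := pullback.condition
    calc (τ ≫ π₂) ≫ e = τ ≫ π₂ ≫ e := by rw [Category.assoc]
      _ = τ ≫ ρ ≫ f₁ := by rw [hpb]
      _ = (τ ≫ ρ) ≫ f₁ := by rw [Category.assoc]
      _ = prod.map w (𝟙 X) ≫ prod.map j₀ (𝟙 X) ≫ f := by rw [hτρ, hf₁]
      _ = prod.map (w ≫ j₀) (𝟙 X) ≫ f := by
            rw [← Category.assoc, prod.map_map, Category.comp_id]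
  -- Now the general case, by a retract argument.
  intro X₀ hX₀ T A B e he f
  obtain ⟨X, hX, rX, hrX⟩ := hP.2 X₀
  obtain ⟨i, hi⟩ := hX₀ rX hrX (𝟙 X₀)
  obtain ⟨U, u, g, hu, hg⟩ := main X hX e he (prod.map (𝟙 T) rX ≫ f)
  refine ⟨U, u, prod.map (𝟙 U) i ≫ g, hu, ?_⟩
  have hmaps : prod.map (𝟙 U) i ≫ prod.map u (𝟙 X) ≫ prod.map (𝟙 T) rX
      = prod.map u (𝟙 X₀) := by
    apply Limits.prod.hom_ext <;> simp [hi]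
  calc (prod.map (𝟙 U) i ≫ g) ≫ e
      = prod.map (𝟙 U) i ≫ prod.map u (𝟙 X) ≫ prod.map (𝟙 T) rX ≫ f := by
        rw [Category.assoc, hg]
    _ = (prod.map (𝟙 U) i ≫ prod.map u (𝟙 X) ≫ prod.map (𝟙 T) rX) ≫ f := by
        simp only [Category.assoc]
    _ = prod.map u (𝟙 X₀) ≫ f := by rw [hmaps]

end Aux


/-- With `P` having weak simple products, the following are equivalent:
(1) `w_X ⊣`-property holds for all `J, X ∈ P`; (2) projectives are closed under binary
products; (3) every projective is internally projective. -/
theorem stmt5 {E : Type u} [Category.{v} E] [HasFiniteLimits E]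
    (hE : IsExact E) (P : Set E) (hP : IsProjectiveCover P)
    (hwsp : HasWeakSimpleProducts P) :
    ((∀ J ∈ P, ∀ X ∈ P, WAdj P J X) ↔
       (∀ X Y : E, RegProjective X → RegProjective Y → RegProjective (X ⨯ Y))) ∧
    ((∀ X Y : E, RegProjective X → RegProjective Y → RegProjective (X ⨯ Y)) ↔
       (∀ X : E, RegProjective X → InternallyProjective X)) := by
  refine ⟨⟨fun h1 => intProj_to_prodProj (wadj_to_intProj hE hP hwsp h1),
    fun h2 => prodProj_to_wadj hP h2⟩,
    ⟨fun h2 => prodProj_to_intProj hP h2, fun h3 => intProj_to_prodProj h3⟩⟩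

end ExComp
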